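/- If a_k = 0 and α_k < 0, then the inequality y + Σⱼ αⱼzⱼ ≥ β (valid for Q) is dominated: the inequality y + Σ_{j≠k} αⱼzⱼ ≥ β − α_k is also valid for Q, and the original inequality is the sum of this one and the valid inequality −α_k(1 − z_k) ≥ 0. In particular, a facet-defining inequality y + Σⱼ αⱼzⱼ ≥ β of conv(Q) with α_k < 0 must have a_k > 0. -/

import Mathlib

open Finset

/-- Membership in the mixing set with knapsack constraint `Q`. -/
def memQ (n : ℕ) (h a : Fin n → ℝ) (p : ℝ) (y : ℝ) (z : Fin n → ℝ) : Prop :=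
  0 ≤ y ∧ (∀ j, z j = 0 ∨ z j = 1) ∧ (∑ j, a j * z j) ≤ p ∧ ∀ j, h j ≤ y + h j * z j

/-- Partial sum `s_k = ∑_{j ≤ k} a_j` (1-indexed paper notation; here the first `k`
0-based indices). -/
def sk (n : ℕ) (a : Fin n → ℝ) (k : ℕ) : ℝ :=
  ∑ j ∈ univ.filter (fun j : Fin n => (j : ℕ) < k), a j

/-- Membership in the residual knapsack set `P_k`. -/
def memPk (n : ℕ) (a : Fin n → ℝ) (p : ℝ) (k : ℕ) (z : Fin n → ℝ) : Prop :=
  (∀ j, z j = 0 ∨ z j = 1) ∧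
    (∑ j ∈ univ.filter (fun j : Fin n => k ≤ (j : ℕ)), a j * z j) ≤ p - sk n a k

/-- The minimizer function `f_k(α) = min{ ∑_{j > k} α_j z_j : z ∈ P_k }`. -/
noncomputable def fk (n : ℕ) (a : Fin n → ℝ) (p : ℝ) (α : Fin n → ℝ) (k : ℕ) : ℝ :=
  sInf {x : ℝ | ∃ z : Fin n → ℝ, memPk n a p k z ∧
    x = ∑ j ∈ univ.filter (fun j : Fin n => k ≤ (j : ℕ)), α j * z j}

/-- If `a_k = 0` and `α_k < 0`, then the valid inequality `y + ∑ α_j z_j ≥ β` is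
dominated: `y + ∑_{j≠k} α_j z_j ≥ β - α_k` is also valid, and `-α_k (1 - z_k) ≥ 0`
is valid (so the original is the sum of the two). In particular a facet-defining
inequality with `α_k < 0` must have `a_k > 0`. -/
theorem stmt10 (n : ℕ) (hn : 0 < n) (h a : Fin n → ℝ) (p : ℝ)
    (hmono : ∀ i j : Fin n, i ≤ j → h j ≤ h i) (hhnn : ∀ j, 0 ≤ h j)
    (hann : ∀ j, 0 ≤ a j) (hap : ∀ j, a j ≤ p) (hsum : p < ∑ j, a j)
    (α : Fin n → ℝ) (β : ℝ) (k : Fin n)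
    (hvalid : ∀ (y : ℝ) (z : Fin n → ℝ), memQ n h a p y z →
      β ≤ y + ∑ j, α j * z j) :
    (a k = 0 → α k < 0 → ∀ (y : ℝ) (z : Fin n → ℝ), memQ n h a p y z →
      β - α k ≤ y + ∑ j ∈ univ.erase k, α j * z j) ∧
    (α k < 0 → ∀ (y : ℝ) (z : Fin n → ℝ), memQ n h a p y z →
      0 ≤ -α k * (1 - z k)) ∧
    (α k < 0 →
      (∃ pts : Fin (n + 1) → ℝ × (Fin n → ℝ),
        (∀ i, memQ n h a p (pts i).1 (pts i).2 ∧
          (pts i).1 + ∑ j, α j * (pts i).2 j = β) ∧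
        AffineIndependent ℝ pts) →
      0 < a k) := by
  have part1 : a k = 0 → α k < 0 → ∀ (y : ℝ) (z : Fin n → ℝ), memQ n h a p y z →
      β - α k ≤ y + ∑ j ∈ univ.erase k, α j * z j := by
    intro hak _ y z hz
    obtain ⟨hy, hz01, hknap, hmix⟩ := hz
    set z' : Fin n → ℝ := Function.update z k 1 with hz'
    have hz'Q : memQ n h a p y z' := by
      refine ⟨hy, ?_, ?_, ?_⟩
      · intro j
        by_cases hj : j = k
        · subst hj; right; simp [hz']
        · simpa [hz', Function.update_of_ne hj] using hz01 j
      · have hsum2 : ∑ j, a j * z' j = ∑ j, a j * z j := by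
          rw [← Finset.add_sum_erase _ (fun j => a j * z' j) (mem_univ k),
            ← Finset.add_sum_erase _ (fun j => a j * z j) (mem_univ k)]
          have hcongr : ∀ j ∈ univ.erase k, a j * z' j = a j * z j := by
            intro j hj
            rw [hz', Function.update_of_ne (mem_erase.mp hj).1]
          rw [Finset.sum_congr rfl hcongr]
          simp [hz', hak]
        rw [hsum2]; exact hknap
      · intro j
        by_cases hj : j = k
        · subst hj; simp only [hz', Function.update_self, mul_one]; linarith [hhnn j]
        · rw [hz', Function.update_of_ne hj]; exact hmix j
    have hv := hvalid y z' hz'Q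
    have hsplit : ∑ j, α j * z' j = α k + ∑ j ∈ univ.erase k, α j * z j := by
      rw [← Finset.add_sum_erase _ (fun j => α j * z' j) (mem_univ k)]
      simp only [hz', Function.update_self, mul_one]
      congr 1
      refine Finset.sum_congr rfl fun j hj => ?_
      rw [Function.update_of_ne (mem_erase.mp hj).1]
    rw [hsplit] at hv
    linarith
  refine ⟨part1, ?_, ?_⟩
  · intro hαk y z hz
    rcases hz.2.1 k with h0 | h1
    · rw [h0]; nlinarith
    · rw [h1]; simp
  · rintro hαk ⟨pts, hpts, hai⟩
    rcases (hann k).lt_or_eq with hlt | heq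
    · exact hlt
    exfalso
    have hak : a k = 0 := heq.symm
    have hzk1 : ∀ i, (pts i).2 k = 1 := by
      intro i
      obtain ⟨hQ, heqi⟩ := hpts i
      have h1 := part1 hak hαk _ _ hQ
      have hsplit : ∑ j, α j * (pts i).2 j
          = α k * (pts i).2 k + ∑ j ∈ univ.erase k, α j * (pts i).2 j :=
        (Finset.add_sum_erase _ (fun j => α j * (pts i).2 j) (mem_univ k)).symm
      have hle : α k * (pts i).2 k ≤ α k := by
        rw [hsplit] at heqi
        linarith
      have hge : 1 ≤ (pts i).2 k := by nlinarith
      rcases hQ.2.1 k with h0 | h1'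
      · rw [h0] at hge; linarith
      · exact h1'
    -- two independent linear functionals vanish on all difference vectors
    let f : (ℝ × (Fin n → ℝ)) →ₗ[ℝ] ℝ × ℝ :=
      { toFun := fun v => (v.1 + ∑ j, α j * v.2 j, v.2 k)
        map_add' := by
          intro u v
          simp only [Prod.fst_add, Prod.snd_add, Pi.add_apply, mul_add,
            Finset.sum_add_distrib, Prod.mk_add_mk, Prod.mk.injEq]
          exact ⟨by ring, trivial⟩
        map_smul' := by
          intro c v
          simp only [Prod.smul_fst, Prod.smul_snd, Pi.smul_apply, smul_eq_mul,
            RingHom.id_apply, Prod.smul_mk, Prod.mk.injEq]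
          have hs : ∑ x, α x * (c * v.2 x) = c * ∑ x, α x * v.2 x := by
            rw [Finset.mul_sum]
            exact Finset.sum_congr rfl fun j _ => by ring
          rw [hs]
          exact ⟨by ring, trivial⟩ }
    have hfapp : ∀ v : ℝ × (Fin n → ℝ), f v = (v.1 + ∑ j, α j * v.2 j, v.2 k) := fun _ => rfl
    have hsurj : Function.Surjective f := by
      rintro ⟨s, t⟩
      refine ⟨(s - α k * t, fun j => if j = k then t else 0), ?_⟩
      rw [hfapp]
      have hsum1 : ∑ j, α j * (if j = k then t else 0) = α k * t := by
        rw [Finset.sum_eq_single k]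
        · simp
        · intro j _ hj; simp [hj]
        · simp
      simp only [hsum1, if_pos rfl, Prod.mk.injEq]
      exact ⟨by ring, by simp⟩
    have hrange : LinearMap.range f = ⊤ := LinearMap.range_eq_top.mpr hsurj
    have hker : Module.finrank ℝ (LinearMap.ker f) = n - 1 := by
      have hrk := LinearMap.finrank_range_add_finrank_ker f
      rw [hrange] at hrk
      rw [finrank_top, Module.finrank_prod, Module.finrank_prod] at hrk
      simp only [Module.finrank_self, Module.finrank_pi, Fintype.card_fin] at hrk
      omega
    have hmem : ∀ i : Fin (n + 1), f (pts i) = (β, 1) := by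
      intro i
      rw [hfapp, (hpts i).2, hzk1 i]
    have li := (affineIndependent_iff_linearIndependent_vsub ℝ pts 0).mp hai
    have hmemker : ∀ i : {x : Fin (n + 1) // x ≠ 0},
        (pts i -ᵥ pts 0 : ℝ × (Fin n → ℝ)) ∈ LinearMap.ker f := by
      intro i
      rw [LinearMap.mem_ker]
      have : (pts i -ᵥ pts 0 : ℝ × (Fin n → ℝ)) = pts i - pts 0 := rfl
      rw [this, map_sub, hmem, hmem, sub_self]
    set v' : {x : Fin (n + 1) // x ≠ 0} → LinearMap.ker f :=
      fun i => ⟨pts i -ᵥ pts 0, hmemker i⟩ with hv'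
    have li' : LinearIndependent ℝ v' := by
      apply LinearIndependent.of_comp (LinearMap.ker f).subtype
      exact li
    have hcard := li'.fintype_card_le_finrank
    rw [hker] at hcard
    have : Fintype.card {x : Fin (n + 1) // x ≠ 0} = n := by
      simp [Fintype.card_subtype_compl]
    omega
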